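/- Let μ > ν ≥ 0. Then Σ_{k=0}^{∞} max{ν^k/(ν+1)^{k+1} − μ^k/(μ+1)^{k+1}, 0} = (μ/(μ+1))^{N₀+1} − (ν/(ν+1))^{N₀+1}, where N₀ = N₀(ν,μ) is the largest integer k with ν^k/(ν+1)^{k+1} ≥ μ^k/(μ+1)^{k+1}. -/

import Mathlib

/-- For `μ > ν ≥ 0`, if `N₀` is the largest natural number `k` with
`ν^k/(ν+1)^{k+1} ≥ μ^k/(μ+1)^{k+1}`, then
`Σ_k max{ν^k/(ν+1)^{k+1} − μ^k/(μ+1)^{k+1}, 0} = (μ/(μ+1))^{N₀+1} − (ν/(ν+1))^{N₀+1}`. -/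
theorem stmt_4 (ν μ : ℝ) (hν : 0 ≤ ν) (hμν : ν < μ) (N₀ : ℕ)
    (hN₀ : IsGreatest {k : ℕ | μ ^ k / (μ + 1) ^ (k + 1) ≤ ν ^ k / (ν + 1) ^ (k + 1)} N₀) :
    ∑' k : ℕ, max (ν ^ k / (ν + 1) ^ (k + 1) - μ ^ k / (μ + 1) ^ (k + 1)) 0
      = (μ / (μ + 1)) ^ (N₀ + 1) - (ν / (ν + 1)) ^ (N₀ + 1) := by
  have hμ0 : 0 < μ := lt_of_le_of_lt hν hμν
  have hν1 : (0:ℝ) < ν + 1 := by linarith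
  have hμ1 : (0:ℝ) < μ + 1 := by linarith
  -- step: membership is downward closed
  have step : ∀ k : ℕ, μ ^ (k+1) / (μ + 1) ^ (k + 2) ≤ ν ^ (k+1) / (ν + 1) ^ (k + 2) →
      μ ^ k / (μ + 1) ^ (k + 1) ≤ ν ^ k / (ν + 1) ^ (k + 1) := by
    intro k h
    have e1 : μ ^ (k+1) / (μ + 1) ^ (k + 2) = (μ/(μ+1)) * (μ ^ k / (μ + 1) ^ (k + 1)) := by
      rw [pow_succ μ, show k+2 = (k+1)+1 from rfl, pow_succ (μ+1)]
      field_simp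
    have e2 : ν ^ (k+1) / (ν + 1) ^ (k + 2) = (ν/(ν+1)) * (ν ^ k / (ν + 1) ^ (k + 1)) := by
      rw [pow_succ ν, show k+2 = (k+1)+1 from rfl, pow_succ (ν+1)]
      field_simp
    rw [e1, e2] at h
    have hab : ν/(ν+1) ≤ μ/(μ+1) := by
      rw [div_le_div_iff₀ hν1 hμ1]; nlinarith
    have hP : 0 ≤ ν ^ k / (ν + 1) ^ (k + 1) :=
      div_nonneg (pow_nonneg hν k) (pow_nonneg hν1.le _)
    have hb : 0 < μ/(μ+1) := div_pos hμ0 hμ1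
    have : (μ/(μ+1)) * (μ ^ k / (μ + 1) ^ (k + 1)) ≤ (μ/(μ+1)) * (ν ^ k / (ν + 1) ^ (k + 1)) :=
      h.trans (mul_le_mul_of_nonneg_right hab hP)
    exact le_of_mul_le_mul_left this hb
  have mem : ∀ n : ℕ, n ∈ {k : ℕ | μ ^ k / (μ + 1) ^ (k + 1) ≤ ν ^ k / (ν + 1) ^ (k + 1)} →
      ∀ m ≤ n, μ ^ m / (μ + 1) ^ (m + 1) ≤ ν ^ m / (ν + 1) ^ (m + 1) := by
    intro n
    induction n with
    | zero => intro h m hm; obtain rfl := Nat.le_zero.mp hm; exact h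
    | succ n ih =>
      intro h m hm
      rcases Nat.eq_or_lt_of_le hm with rfl | hm'
      · exact h
      · exact ih (step n h) m (Nat.lt_succ_iff.mp hm')
  have hle : ∀ m ≤ N₀, μ ^ m / (μ + 1) ^ (m + 1) ≤ ν ^ m / (ν + 1) ^ (m + 1) :=
    mem N₀ hN₀.1
  have hgt : ∀ m, N₀ < m → ν ^ m / (ν + 1) ^ (m + 1) < μ ^ m / (μ + 1) ^ (m + 1) := by
    intro m hm
    by_contra h
    exact absurd (hN₀.2 (not_lt.mp h)) (Nat.not_le.mpr hm)
  have hzero : ∀ m ∉ Finset.range (N₀ + 1),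
      max (ν ^ m / (ν + 1) ^ (m + 1) - μ ^ m / (μ + 1) ^ (m + 1)) 0 = 0 := by
    intro m hm
    rw [Finset.mem_range, Nat.not_lt] at hm
    exact max_eq_right (by linarith [hgt m hm])
  rw [tsum_eq_sum hzero]
  have hmax : ∀ m ∈ Finset.range (N₀ + 1),
      max (ν ^ m / (ν + 1) ^ (m + 1) - μ ^ m / (μ + 1) ^ (m + 1)) 0
        = ν ^ m / (ν + 1) ^ (m + 1) - μ ^ m / (μ + 1) ^ (m + 1) := by
    intro m hm
    rw [Finset.mem_range, Nat.lt_succ_iff] at hm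
    exact max_eq_left (by linarith [hle m hm])
  rw [Finset.sum_congr rfl hmax, Finset.sum_sub_distrib]
  have geom : ∀ x : ℝ, 0 ≤ x → ∀ n : ℕ,
      ∑ k ∈ Finset.range n, x ^ k / (x + 1) ^ (k + 1) = 1 - (x/(x+1)) ^ n := by
    intro x hx n
    have hx1 : (0:ℝ) < x + 1 := by linarith
    have h1 : ∀ k : ℕ, x ^ k / (x + 1) ^ (k + 1) = (x/(x+1)) ^ k * (1/(x+1)) := by
      intro k
      rw [div_pow, pow_succ]
      field_simp
    simp_rw [h1]
    rw [← Finset.sum_mul]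
    have hxne : x/(x+1) ≠ 1 := by
      intro h
      have := (div_eq_one_iff_eq hx1.ne').mp h
      linarith
    rw [geom_sum_eq hxne]
    have : x / (x + 1) - 1 = -(1/(x+1)) := by field_simp; ring
    rw [this]
    field_simp
    ring
  rw [geom ν hν (N₀+1), geom μ hμ0.le (N₀+1)]
  ring
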